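/- Let q be a prime power, n coprime to q, and suppose F_q[X]/⟨X^n−1⟩ = ⊕_{i=1}^N V_i is the decomposition into the subspaces V_i corresponding (via the Chinese Remainder Theorem) to the distinct monic irreducible factors f_i(X) of X^n−1. If U ≤ V_1 is a subspace whose orbit under multiplication by powers of X covers V_1, then U' = U ⊕ (⊕_{i≥2} V_i) is a cyclically covering subspace of F_q[X]/⟨X^n−1⟩, and codim(U') = codim of U in V_1. -/

import Mathlib

open Polynomial Module

set_option maxHeartbeats 1000000 in

/-- Let X^n − 1 = ∏ f_i be the factorization into distinct monic irreducibles over F_q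
(gcd(n,q)=1), and let V_i ≤ F_q[X]/⟨X^n−1⟩ be the subspace of classes of polynomials
divisible by ∏_{j≠i} f_j. If U ≤ V_1 has its orbit under multiplication by X covering
V_1, then U' = U ⊔ (⊔_{i≥2} V_i) is cyclically covering and
codim(U') = codim of U in V_1. -/
theorem stmt_7 (F : Type*) [Field F] [Fintype F] (n : ℕ) (hn : 0 < n)
    (hcop : Nat.Coprime n (Fintype.card F)) (N : ℕ) (hN : 0 < N)
    (f : Fin N → F[X]) (hirr : ∀ i, Irreducible (f i)) (hmon : ∀ i, (f i).Monic)
    (hdist : Function.Injective f)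
    (hfact : ∏ i, f i = X ^ n - 1)
    (V : Fin N → Submodule F (F[X] ⧸ Ideal.span {(X ^ n - 1 : F[X])}))
    (hV : ∀ i, V i = Submodule.map
      (Ideal.Quotient.mkₐ F (Ideal.span {(X ^ n - 1 : F[X])})).toLinearMap
      ((Ideal.span {∏ j ∈ Finset.univ.erase i, f j}).restrictScalars F))
    (U : Submodule F (F[X] ⧸ Ideal.span {(X ^ n - 1 : F[X])}))
    (hU : U ≤ V ⟨0, hN⟩)
    (hcover : ∀ x ∈ V ⟨0, hN⟩, ∃ r : ℕ,
      (Ideal.Quotient.mk (Ideal.span {(X ^ n - 1 : F[X])}) X) ^ r * x ∈ U) :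
    (∀ x : F[X] ⧸ Ideal.span {(X ^ n - 1 : F[X])}, ∃ r : ℕ,
      (Ideal.Quotient.mk (Ideal.span {(X ^ n - 1 : F[X])}) X) ^ r * x ∈
        U ⊔ ⨆ i : Fin N, ⨆ (_ : i ≠ ⟨0, hN⟩), V i) ∧
    finrank F (F[X] ⧸ Ideal.span {(X ^ n - 1 : F[X])}) -
      finrank F (U ⊔ ⨆ i : Fin N, ⨆ (_ : i ≠ ⟨0, hN⟩), V i : Submodule F _) =
    finrank F (V ⟨0, hN⟩) - finrank F U := by
    classical
  set i0 : Fin N := ⟨0, hN⟩ with hi0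
  set g : Fin N → F[X] := fun i => ∏ j ∈ Finset.univ.erase i, f j with hg
  have hpmon : (X ^ n - 1 : F[X]).Monic := by
    rw [← hfact]; exact monic_prod_of_monic _ _ fun i _ => hmon i
  have hpne : (X ^ n - 1 : F[X]) ≠ 0 := hpmon.ne_zero
  haveI : Nonempty (Fin N) := ⟨i0⟩
  have hcp : ∀ i j : Fin N, i ≠ j → IsCoprime (f i) (f j) := by
    intro i j hij
    refine (hirr i).coprime_iff_not_dvd.mpr fun hdvd => hij ?_
    exact hdist (Polynomial.eq_of_monic_of_associated (hmon i) (hmon j)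
      (associated_of_dvd_dvd hdvd ((hirr i).dvd_symm (hirr j) hdvd)))
  have hfg : ∀ i, f i * g i = X ^ n - 1 := fun i => by
    rw [hg]; exact (Finset.mul_prod_erase _ _ (Finset.mem_univ i)).trans hfact
  have hVmem : ∀ (i : Fin N) (x : F[X] ⧸ Ideal.span {(X ^ n - 1 : F[X])}),
      x ∈ V i ↔ ∃ a : F[X], g i ∣ a ∧
        Ideal.Quotient.mk (Ideal.span {(X ^ n - 1 : F[X])}) a = x := by
    intro i x
    rw [hV i]
    simp only [Submodule.mem_map, Submodule.restrictScalars_mem,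
      Ideal.mem_span_singleton, AlgHom.toLinearMap_apply, Ideal.Quotient.mkₐ_eq_mk]
    exact Iff.rfl
  have hstab : ∀ (i : Fin N) (c x : F[X] ⧸ Ideal.span {(X ^ n - 1 : F[X])}),
      x ∈ V i → c * x ∈ V i := by
    intro i c x hx
    obtain ⟨a, ha, rfl⟩ := (hVmem i x).mp hx
    obtain ⟨b, rfl⟩ := Ideal.Quotient.mk_surjective c
    exact (hVmem i _).mpr ⟨b * a, ha.mul_left b,
      (map_mul (Ideal.Quotient.mk (Ideal.span {(X ^ n - 1 : F[X])})) b a).symm⟩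
  set W : Submodule F (F[X] ⧸ Ideal.span {(X ^ n - 1 : F[X])}) :=
    ⨆ i : Fin N, ⨆ (_ : i ≠ i0), V i with hW
  have hWstab : ∀ (c x : F[X] ⧸ Ideal.span {(X ^ n - 1 : F[X])}),
      x ∈ W → c * x ∈ W := by
    intro c x hx
    have h1 : W ≤ Submodule.comap (LinearMap.mulLeft F c) W := by
      refine iSup_le fun i => iSup_le fun hi => fun y hy => ?_
      exact Submodule.mem_iSup_of_mem i (Submodule.mem_iSup_of_mem hi (hstab i c y hy))
    exact h1 hx
  have htop : V i0 ⊔ W = ⊤ := by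
    rw [eq_top_iff]
    rintro x -
    obtain ⟨a, rfl⟩ := Ideal.Quotient.mk_surjective x
    obtain ⟨μ, hμ⟩ := (exists_sum_eq_one_iff_pairwise_coprime' (s := f)).mpr
      (fun i j hij => hcp i j hij)
    have ha : a = ∑ i, μ i * (∏ j ∈ ({i}ᶜ : Finset (Fin N)), f j) * a := by
      rw [← Finset.sum_mul, hμ, one_mul]
    have hcompl : ∀ i : Fin N, (∏ j ∈ ({i}ᶜ : Finset (Fin N)), f j) = g i := by
      intro i; rw [hg]; congr 1
      ext j; simp [Finset.mem_erase, Finset.mem_compl, ne_comm, eq_comm]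
    have key : ∀ i : Fin N, Ideal.Quotient.mk (Ideal.span {(X ^ n - 1 : F[X])})
        (μ i * (∏ j ∈ ({i}ᶜ : Finset (Fin N)), f j) * a) ∈ V i := by
      intro i
      refine (hVmem i _).mpr ⟨_, ?_, rfl⟩
      rw [hcompl i]
      exact (dvd_mul_left (g i) (μ i)).mul_right a
    have hsum : Ideal.Quotient.mk (Ideal.span {(X ^ n - 1 : F[X])}) a
        = ∑ i, Ideal.Quotient.mk (Ideal.span {(X ^ n - 1 : F[X])})
            (μ i * (∏ j ∈ ({i}ᶜ : Finset (Fin N)), f j) * a) := by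
      rw [← map_sum, ← ha]
    rw [hsum]
    refine Submodule.sum_mem _ fun i _ => ?_
    by_cases hi : i = i0
    · exact Submodule.mem_sup_left (hi ▸ key i)
    · exact Submodule.mem_sup_right
        (Submodule.mem_iSup_of_mem i (Submodule.mem_iSup_of_mem hi (key i)))
  have hWf : ∀ x ∈ W, ∃ b : F[X], f i0 ∣ b ∧
      Ideal.Quotient.mk (Ideal.span {(X ^ n - 1 : F[X])}) b = x := by
    intro x hx
    have hle : W ≤ Submodule.map
        (Ideal.Quotient.mkₐ F (Ideal.span {(X ^ n - 1 : F[X])})).toLinearMap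
        ((Ideal.span {f i0}).restrictScalars F) := by
      refine iSup_le fun i => iSup_le fun hi => ?_
      rw [hV i]
      refine Submodule.map_mono ?_
      have hdvd : f i0 ∣ ∏ j ∈ Finset.univ.erase i, f j :=
        Finset.dvd_prod_of_mem f (Finset.mem_erase.mpr ⟨Ne.symm hi, Finset.mem_univ _⟩)
      intro y hy
      simp only [Submodule.restrictScalars_mem, Ideal.mem_span_singleton] at hy ⊢
      exact hdvd.trans hy
    obtain ⟨b, hb, rfl⟩ := hle hx
    exact ⟨b, Ideal.mem_span_singleton.mp hb, rfl⟩
  have hbot : V i0 ⊓ W = ⊥ := by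
    rw [eq_bot_iff]
    rintro x ⟨hx1, hx2⟩
    obtain ⟨a, hga, rfl⟩ := (hVmem i0 _).mp hx1
    obtain ⟨b, hfb, hb⟩ := hWf _ hx2
    have hab : (X ^ n - 1 : F[X]) ∣ a - b := by
      rw [← Ideal.mem_span_singleton, ← Ideal.Quotient.eq_zero_iff_mem,
        map_sub, hb, sub_self]
    have hfa : f i0 ∣ a := by
      have h1 : f i0 ∣ a - b := dvd_trans ⟨g i0, (hfg i0).symm⟩ hab
      have h2 := dvd_add h1 hfb
      rwa [sub_add_cancel] at h2
    have hcpr : IsCoprime (f i0) (g i0) := by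
      rw [hg]
      exact IsCoprime.prod_right fun j hj =>
        hcp i0 j (Ne.symm (Finset.mem_erase.mp hj).1)
    have hd : (X ^ n - 1 : F[X]) ∣ a := (hfg i0) ▸ hcpr.mul_dvd hfa hga
    have hz : Ideal.Quotient.mk (Ideal.span {(X ^ n - 1 : F[X])}) a = 0 := by
      rw [Ideal.Quotient.eq_zero_iff_mem, Ideal.mem_span_singleton]; exact hd
    simp [hz]
  haveI hfd : FiniteDimensional F (F[X] ⧸ Ideal.span {(X ^ n - 1 : F[X])}) :=
    Module.Finite.of_basis (AdjoinRoot.powerBasis hpne).basis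
  constructor
  · intro x
    have hx : x ∈ V i0 ⊔ W := htop ▸ Submodule.mem_top
    obtain ⟨v, hv, w, hw, rfl⟩ := Submodule.mem_sup.mp hx
    obtain ⟨r, hr⟩ := hcover v hv
    refine ⟨r, ?_⟩
    rw [mul_add]
    exact Submodule.add_mem _ (Submodule.mem_sup_left hr)
      (Submodule.mem_sup_right (hWstab _ w hw))
  · have hUW : U ⊓ W = ⊥ :=
      le_bot_iff.mp (le_trans (inf_le_inf_right W hU) hbot.le)
    have e1 := Submodule.finrank_sup_add_finrank_inf_eq (V i0) W
    have e2 := Submodule.finrank_sup_add_finrank_inf_eq U W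
    rw [htop, hbot] at e1
    rw [hUW] at e2
    rw [finrank_top, finrank_bot] at e1
    rw [finrank_bot] at e2
    omega
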